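/- Let H be a complex Hilbert space and let M_A and M_B be von Neumann algebras on H that commute (a * b = b * a for all a ∈ M_A, b ∈ M_B) and have the Uhlmann property. Then for every vector Ψ ∈ H, the topological closure of the linear span of {a Ψ | a ∈ M_A.commutant} equals the topological closure of the linear span of {b Ψ | b ∈ M_B}. -/

import Mathlib

open scoped InnerProductSpace

/-- The pair `(M_A, M_B)` of von Neumann algebras has the *Uhlmann property* if any two
unit vectors inducing the same state on `M_A` can be mapped onto each other, up to
arbitrarily small error, by unitaries of `M_B`. -/
def UhlmannProperty {H : Type*} [NormedAddCommGroup H] [InnerProductSpace ℂ H]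
    [CompleteSpace H] (M_A M_B : VonNeumannAlgebra H) : Prop :=
  ∀ Ψ Φ : H, ‖Ψ‖ = 1 → ‖Φ‖ = 1 →
    (∀ a ∈ M_A, ⟪Ψ, a Ψ⟫_ℂ = ⟪Φ, a Φ⟫_ℂ) →
    ∀ ε : ℝ, 0 < ε →
      ∃ u ∈ M_B, star u * u = 1 ∧ u * star u = 1 ∧ ‖⟪Ψ, u Φ⟫_ℂ‖ ≥ 1 - ε

/-- Centralizers are closed in a normed ring. -/
lemma isClosed_centralizer' {A : Type*} [NormedRing A] (s : Set A) :
    IsClosed (Set.centralizer s) := by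
  have h : Set.centralizer s = ⋂ m ∈ s, {c : A | m * c = c * m} := by
    ext c; simp [Set.mem_centralizer_iff]
  rw [h]
  exact isClosed_biInter fun m _ =>
    isClosed_eq (continuous_const.mul continuous_id) (continuous_id.mul continuous_const)

/-- The continuous functional calculus of a normal element of a closed star subalgebra
stays within the subalgebra. -/
lemma cfc_mem_of_mem_closedStarSubalgebra {A : Type*} [CStarAlgebra A]
    {S : StarSubalgebra ℂ A} (hS : IsClosed (S : Set A)) {b : A} [IsStarNormal b]
    (hb : b ∈ S) (f : ℂ → ℂ) : cfc f b ∈ S := by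
  by_cases hf : ContinuousOn f (spectrum ℂ b)
  · rw [cfc_apply f b ‹IsStarNormal b› hf, cfcHom_eq_of_isStarNormal]
    exact StarAlgebra.elemental.le_of_mem hS hb
      (SetLike.coe_mem ((continuousFunctionalCalculus b) _))
  · rw [cfc_apply_of_not_continuousOn b hf]; exact zero_mem S

/-- A selfadjoint element of norm at most one is the mean of a unitary (given by continuous
functional calculus) and its adjoint. -/
lemma exists_unitary_decomp {A : Type*} [CStarAlgebra A] [NormOneClass A] {b : A}
    (hb : IsSelfAdjoint b)
    (hnorm : ‖b‖ ≤ 1) :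
    ∃ f : ℂ → ℂ, cfc f b ∈ unitary A ∧ cfc f b + star (cfc f b) = (2 : ℂ) • b := by
  have hnb : IsStarNormal b := hb.isStarNormal
  set g : ℂ → ℂ := fun z => (z.re : ℂ) + (Real.sqrt (1 - z.re ^ 2) : ℝ) * Complex.I with hg
  have hgc : Continuous g := by
    apply Continuous.add
    · exact Complex.continuous_ofReal.comp Complex.continuous_re
    · exact (Complex.continuous_ofReal.comp
        (Real.continuous_sqrt.comp (by continuity))).mul continuous_const
  have hspec : ∀ z ∈ spectrum ℂ b, ((z.re : ℂ) = z ∧ z.re ^ 2 ≤ 1) := by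
    intro z hz
    constructor
    · simpa using hb.spectrumRestricts.rightInvOn hz
    · have h1 : ‖z‖ ≤ 1 := (spectrum.norm_le_norm_of_mem hz).trans hnorm
      have h2 : |z.re| ≤ ‖z‖ := by
        exact Complex.abs_re_le_norm z
      nlinarith [sq_abs z.re, abs_nonneg z.re]
  have hstar : ∀ z : ℂ, star (g z) =
      (z.re : ℂ) - (Real.sqrt (1 - z.re ^ 2) : ℝ) * Complex.I := by
    intro z
    simp [hg, Complex.conj_ofReal]
    ring
  refine ⟨g, ?_, ?_⟩
  · rw [cfc_unitary_iff g b hnb hgc.continuousOn]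
    intro z hz
    obtain ⟨-, h2⟩ := hspec z hz
    have hsC : ((Real.sqrt (1 - z.re ^ 2) : ℝ) : ℂ) ^ 2 = 1 - (z.re : ℂ) ^ 2 := by
      rw [← Complex.ofReal_pow, Real.sq_sqrt (by linarith)]
      push_cast; ring
    rw [hstar z]
    simp only [hg]
    linear_combination hsC - ((Real.sqrt (1 - z.re ^ 2) : ℝ) : ℂ) ^ 2 * Complex.I_sq
  · have h2z : cfc (fun z : ℂ => 2 * z) b = (2 : ℂ) • b := by
      have := cfc_const_mul (2 : ℂ) (fun z : ℂ => z) b (by fun_prop)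
      simpa [cfc_id' ℂ b] using this
    rw [← cfc_star g b,
      ← cfc_add b g (fun x => star (g x)) hgc.continuousOn
        ((continuous_star.comp hgc).continuousOn), ← h2z]
    apply cfc_congr
    intro z hz
    obtain ⟨h1, -⟩ := hspec z hz
    show g z + star (g z) = 2 * z
    rw [hstar z]
    simp only [hg]
    linear_combination (2 : ℂ) * h1

/-- Scaling the cyclic vector does not change the cyclic subspace. -/
lemma span_orbit_smul {H : Type*} [NormedAddCommGroup H] [InnerProductSpace ℂ H]
    [CompleteSpace H] (S : VonNeumannAlgebra H) (c : ℂ) (hc : c ≠ 0) (Ψ : H) :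
    Submodule.span ℂ {x : H | ∃ a ∈ S, a (c • Ψ) = x} =
      Submodule.span ℂ {x : H | ∃ a ∈ S, a Ψ = x} := by
  apply le_antisymm <;> rw [Submodule.span_le] <;> rintro x ⟨a, ha, rfl⟩
  · rw [map_smul]
    exact Submodule.smul_mem _ _ (Submodule.subset_span ⟨a, ha, rfl⟩)
  · have : a Ψ = c⁻¹ • a (c • Ψ) := by
      rw [map_smul, smul_smul, inv_mul_cancel₀ hc, one_smul]
    rw [this]
    exact Submodule.smul_mem _ _ (Submodule.subset_span ⟨a, ha, rfl⟩)

lemma uhlmann_aux {H : Type*} [NormedAddCommGroup H]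
    [InnerProductSpace ℂ H] [CompleteSpace H]
    (M_A M_B : VonNeumannAlgebra H)
    (hcomm : ∀ a ∈ M_A, ∀ b ∈ M_B, a * b = b * a)
    (huhlmann : UhlmannProperty M_A M_B) (Ψ : H) (hΨ : ‖Ψ‖ = 1) :
    (Submodule.span ℂ {x : H | ∃ a ∈ M_A.commutant, a Ψ = x}).topologicalClosure =
      (Submodule.span ℂ {x : H | ∃ b ∈ M_B, b Ψ = x}).topologicalClosure := by
  rcases subsingleton_or_nontrivial H with hsub | hnt
  · exact Subsingleton.elim _ _
  set K := (Submodule.span ℂ {x : H | ∃ b ∈ M_B, b Ψ = x}).topologicalClosure with hKdef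
  have hKclosed : IsClosed (K : Set H) := Submodule.isClosed_topologicalClosure _
  haveI : CompleteSpace K := hKclosed.completeSpace_coe
  -- Step 1: unitaries of the commutant map Ψ into K.
  have key : ∀ w : H →L[ℂ] H, w ∈ M_A.commutant → star w * w = 1 → w * star w = 1 →
      w Ψ ∈ K := by
    intro w hw hw1 hw2
    set Φ := w Ψ with hΦdef
    have hΦsq : ⟪Φ, Φ⟫_ℂ = ⟪Ψ, Ψ⟫_ℂ := by
      calc ⟪Φ, Φ⟫_ℂ = ⟪Ψ, (ContinuousLinearMap.adjoint w) (w Ψ)⟫_ℂ :=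
            (ContinuousLinearMap.adjoint_inner_right w Ψ (w Ψ)).symm
        _ = ⟪Ψ, (star w * w) Ψ⟫_ℂ := by rw [ContinuousLinearMap.star_eq_adjoint]; rfl
        _ = ⟪Ψ, Ψ⟫_ℂ := by rw [hw1, ContinuousLinearMap.one_apply]
    have hΦnorm : ‖Φ‖ = 1 := by
      have h2 : ‖Φ‖ * ‖Φ‖ = ‖Ψ‖ * ‖Ψ‖ := by
        rw [← inner_self_eq_norm_mul_norm (𝕜 := ℂ), ← inner_self_eq_norm_mul_norm (𝕜 := ℂ),
          hΦsq]
      calc ‖Φ‖ = Real.sqrt (‖Φ‖ * ‖Φ‖) := (Real.sqrt_mul_self (norm_nonneg _)).symm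
        _ = Real.sqrt (‖Ψ‖ * ‖Ψ‖) := by rw [h2]
        _ = 1 := by rw [hΨ]; simp
    have hstate : ∀ a ∈ M_A, ⟪Ψ, a Ψ⟫_ℂ = ⟪Φ, a Φ⟫_ℂ := by
      intro a ha
      have hcom : a * w = w * a := VonNeumannAlgebra.mem_commutant_iff.mp hw a ha
      have h1 : ⟪Φ, a Φ⟫_ℂ = ⟪Ψ, (star w * (a * w)) Ψ⟫_ℂ := by
        calc ⟪Φ, a Φ⟫_ℂ = ⟪Ψ, (ContinuousLinearMap.adjoint w) (a (w Ψ))⟫_ℂ :=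
              (ContinuousLinearMap.adjoint_inner_right w Ψ (a (w Ψ))).symm
          _ = ⟪Ψ, (star w * (a * w)) Ψ⟫_ℂ := by
              rw [ContinuousLinearMap.star_eq_adjoint]; rfl
      rw [h1, hcom, ← mul_assoc, hw1, one_mul]
    have hPnorm : 1 ≤ ‖(K.orthogonalProjectionOnto Φ : H)‖ := by
      refine le_of_forall_pos_le_add ?_
      intro ε hε
      obtain ⟨v, hvB, hv1, hv2, hvip⟩ := huhlmann Ψ Φ hΨ hΦnorm hstate ε hε
      set k : H := (star v) Ψ with hkdef
      have hkK : k ∈ K :=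
        Submodule.le_topologicalClosure _ (Submodule.subset_span ⟨star v, star_mem hvB, rfl⟩)
      have hip : ⟪k, Φ⟫_ℂ = ⟪Ψ, v Φ⟫_ℂ := by
        rw [hkdef, ContinuousLinearMap.star_eq_adjoint,
          ContinuousLinearMap.adjoint_inner_left]
      have hknorm : ‖k‖ ≤ 1 := by
        have hvn : ‖v‖ ≤ 1 := by
          have h1 : ‖star v * v‖ = ‖v‖ * ‖v‖ := CStarRing.norm_star_mul_self
          rw [hv1] at h1
          have h2 : ‖(1 : H →L[ℂ] H)‖ ≤ 1 := by
            rw [ContinuousLinearMap.one_def]; exact ContinuousLinearMap.norm_id_le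
          nlinarith [norm_nonneg v]
        calc ‖k‖ ≤ ‖star v‖ * ‖Ψ‖ := (star v).le_opNorm Ψ
          _ = ‖v‖ := by rw [norm_star, hΨ, mul_one]
          _ ≤ 1 := hvn
      have horth : ⟪k, Φ - (K.orthogonalProjectionOnto Φ : H)⟫_ℂ = 0 :=
        (Submodule.mem_orthogonal K _).mp (K.sub_starProjection_mem_orthogonal Φ) k hkK
      have hsplit : ⟪k, Φ⟫_ℂ = ⟪k, (K.orthogonalProjectionOnto Φ : H)⟫_ℂ := by
        have h := inner_sub_right (𝕜 := ℂ) k Φ (K.orthogonalProjectionOnto Φ : H)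
        rw [horth] at h
        linear_combination -h
      have h3 : 1 - ε ≤ ‖(K.orthogonalProjectionOnto Φ : H)‖ := by
        calc 1 - ε ≤ ‖⟪Ψ, v Φ⟫_ℂ‖ := hvip
          _ = ‖⟪k, (K.orthogonalProjectionOnto Φ : H)⟫_ℂ‖ := by rw [← hsplit, hip]
          _ ≤ ‖k‖ * ‖(K.orthogonalProjectionOnto Φ : H)‖ := norm_inner_le_norm _ _
          _ ≤ 1 * ‖(K.orthogonalProjectionOnto Φ : H)‖ :=
              mul_le_mul_of_nonneg_right hknorm (norm_nonneg _)
          _ = ‖(K.orthogonalProjectionOnto Φ : H)‖ := one_mul _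
      linarith
    have h0 : ⟪(K.orthogonalProjectionOnto Φ : H), Φ - (K.orthogonalProjectionOnto Φ : H)⟫_ℂ = 0 :=
      (Submodule.mem_orthogonal K _).mp (K.sub_starProjection_mem_orthogonal Φ) _
        (SetLike.coe_mem _)
    have hpyth := norm_add_sq_eq_norm_sq_add_norm_sq_of_inner_eq_zero _ _ h0
    rw [add_sub_cancel, hΦnorm] at hpyth
    have hzero : ‖Φ - (K.orthogonalProjectionOnto Φ : H)‖ = 0 := by
      have hle : ‖Φ - (K.orthogonalProjectionOnto Φ : H)‖ ≤ 0 := by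
        nlinarith [norm_nonneg (Φ - (K.orthogonalProjectionOnto Φ : H))]
      exact le_antisymm hle (norm_nonneg _)
    have heq : Φ = (K.orthogonalProjectionOnto Φ : H) :=
      sub_eq_zero.mp (norm_eq_zero.mp hzero)
    rw [heq]
    exact SetLike.coe_mem _
  -- scalar multiples stay in the commutant
  have hsmul : ∀ (r : ℂ) (x : H →L[ℂ] H), x ∈ M_A.commutant → r • x ∈ M_A.commutant := by
    intro r x hx
    rw [VonNeumannAlgebra.mem_commutant_iff] at hx ⊢
    intro g hg
    rw [mul_smul_comm, smul_mul_assoc, hx g hg]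
  have hMclosed : IsClosed ((M_A.commutant : Set (H →L[ℂ] H))) := by
    rw [VonNeumannAlgebra.coe_commutant]
    exact isClosed_centralizer' _
  -- Step 2: selfadjoint contractions of the commutant map Ψ into K.
  have step2 : ∀ b ∈ M_A.commutant, IsSelfAdjoint b → ‖b‖ ≤ 1 → b Ψ ∈ K := by
    intro b hb hsa hn
    haveI : IsStarNormal b := hsa.isStarNormal
    obtain ⟨f, huni, hsum⟩ := exists_unitary_decomp hsa hn
    set u := cfc f b with hudef
    have huM : u ∈ M_A.commutant := by
      have := cfc_mem_of_mem_closedStarSubalgebra (S := M_A.commutant.toStarSubalgebra)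
        (by simpa using hMclosed) hb f
      exact this
    have h1 := (Unitary.mem_iff.mp huni).1
    have h2 := (Unitary.mem_iff.mp huni).2
    have hu1 : u Ψ ∈ K := key u huM h1 h2
    have hu2 : (star u) Ψ ∈ K :=
      key (star u) (star_mem huM) (by simpa [star_star] using h2)
        (by simpa [star_star] using h1)
    have happ : ((2 : ℂ) • b) Ψ = u Ψ + (star u) Ψ := by
      rw [← hsum]; rfl
    have hb2 : b Ψ = (2 : ℂ)⁻¹ • (u Ψ + (star u) Ψ) := by
      rw [← happ, ContinuousLinearMap.smul_apply, smul_smul,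
        inv_mul_cancel₀ (by norm_num : (2 : ℂ) ≠ 0), one_smul]
    rw [hb2]
    exact Submodule.smul_mem _ _ (Submodule.add_mem _ hu1 hu2)
  -- Step 3: selfadjoint elements of the commutant map Ψ into K.
  have step3 : ∀ b ∈ M_A.commutant, IsSelfAdjoint b → b Ψ ∈ K := by
    intro b hb hsa
    have hc0 : (0 : ℝ) < ‖b‖ + 1 := by positivity
    set b' := (((‖b‖ + 1)⁻¹ : ℝ) : ℂ) • b with hb'def
    have hb'M : b' ∈ M_A.commutant := hsmul _ _ hb
    have hb'sa : IsSelfAdjoint b' := by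
      rw [hb'def, IsSelfAdjoint, star_smul, Complex.star_def, Complex.conj_ofReal,
        hsa.star_eq]
    have hb'n : ‖b'‖ ≤ 1 := by
      rw [hb'def, norm_smul]
      have h1 : ‖(((‖b‖ + 1)⁻¹ : ℝ) : ℂ)‖ = (‖b‖ + 1)⁻¹ := by
        rw [Complex.norm_real, Real.norm_eq_abs, abs_of_pos (by positivity)]
      rw [h1, inv_mul_le_iff₀ hc0]
      linarith
    have hres := step2 b' hb'M hb'sa hb'n
    have hbΨ : b Ψ = ((‖b‖ + 1 : ℝ) : ℂ) • (b' Ψ) := by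
      rw [hb'def, ContinuousLinearMap.smul_apply, smul_smul]
      rw [show ((‖b‖ + 1 : ℝ) : ℂ) * (((‖b‖ + 1)⁻¹ : ℝ) : ℂ) = 1 by
        rw [← Complex.ofReal_mul, mul_inv_cancel₀ hc0.ne', Complex.ofReal_one]]
      rw [one_smul]
    rw [hbΨ]
    exact Submodule.smul_mem _ _ hres
  -- Step 4: every element of the commutant maps Ψ into K.
  have step4 : ∀ a ∈ M_A.commutant, a Ψ ∈ K := by
    intro a ha
    set b := ((2 : ℂ)⁻¹) • (a + star a) with hbdef
    set c := ((2 : ℂ)⁻¹ * Complex.I) • (star a - a) with hcdef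
    have hbM : b ∈ M_A.commutant := hsmul _ _ (add_mem ha (star_mem ha))
    have hcM : c ∈ M_A.commutant := hsmul _ _ (sub_mem (star_mem ha) ha)
    have hbsa : IsSelfAdjoint b := by
      rw [hbdef, IsSelfAdjoint, star_smul, star_add, star_star]
      rw [show star ((2 : ℂ)⁻¹) = (2 : ℂ)⁻¹ by simp]
      rw [add_comm]
    have hcsa : IsSelfAdjoint c := by
      rw [hcdef, IsSelfAdjoint, star_smul, star_sub, star_star]
      rw [show star ((2 : ℂ)⁻¹ * Complex.I) = -((2 : ℂ)⁻¹ * Complex.I) by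
        simp [Complex.star_def]]
      rw [neg_smul, ← smul_neg, neg_sub]
    have hco : Complex.I • c = ((2 : ℂ)⁻¹) • (a - star a) := by
      rw [hcdef, smul_smul]
      rw [show Complex.I * ((2 : ℂ)⁻¹ * Complex.I) = -(2 : ℂ)⁻¹ by
        rw [mul_left_comm, Complex.I_mul_I]; ring]
      rw [neg_smul, ← smul_neg, neg_sub]
    have hdecomp : b + Complex.I • c = a := by
      rw [hco, hbdef, ← smul_add]
      rw [show (a + star a) + (a - star a) = (2 : ℂ) • a by rw [two_smul]; abel]
      rw [smul_smul, inv_mul_cancel₀ (by norm_num : (2 : ℂ) ≠ 0), one_smul]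
    have happ : a Ψ = b Ψ + Complex.I • (c Ψ) := by
      rw [← hdecomp]; rfl
    rw [happ]
    exact Submodule.add_mem _ (step3 b hbM hbsa)
      (Submodule.smul_mem _ _ (step3 c hcM hcsa))
  -- Conclusion
  apply le_antisymm
  · refine Submodule.topologicalClosure_minimal _ ?_ hKclosed
    rw [Submodule.span_le]
    rintro x ⟨a, ha, rfl⟩
    exact step4 a ha
  · apply Submodule.topologicalClosure_mono
    apply Submodule.span_mono
    rintro x ⟨bb, hbb, rfl⟩
    exact ⟨bb, VonNeumannAlgebra.mem_commutant_iff.mpr (fun g hg => hcomm g hg bb hbb), rfl⟩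

/-- Under the Uhlmann property, the cyclic subspaces of `M_A.commutant` and `M_B`
coincide for every vector. -/
theorem cyclic_subspaces_eq_of_uhlmann {H : Type*} [NormedAddCommGroup H]
    [InnerProductSpace ℂ H] [CompleteSpace H]
    (M_A M_B : VonNeumannAlgebra H)
    (hcomm : ∀ a ∈ M_A, ∀ b ∈ M_B, a * b = b * a)
    (huhlmann : UhlmannProperty M_A M_B) :
    ∀ Ψ : H,
      (Submodule.span ℂ {x : H | ∃ a ∈ M_A.commutant, a Ψ = x}).topologicalClosure =
      (Submodule.span ℂ {x : H | ∃ b ∈ M_B, b Ψ = x}).topologicalClosure := by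
  intro Ψ
  rcases eq_or_ne Ψ 0 with rfl | hΨ0
  · have h1 : {x : H | ∃ a ∈ M_A.commutant, a (0 : H) = x} = {(0 : H)} := by
      ext x
      simp only [Set.mem_setOf_eq, Set.mem_singleton_iff]
      constructor
      · rintro ⟨a, -, rfl⟩; simp
      · rintro rfl; exact ⟨1, one_mem _, by simp⟩
    have h2 : {x : H | ∃ b ∈ M_B, b (0 : H) = x} = {(0 : H)} := by
      ext x
      simp only [Set.mem_setOf_eq, Set.mem_singleton_iff]
      constructor
      · rintro ⟨a, -, rfl⟩; simp
      · rintro rfl; exact ⟨1, one_mem _, by simp⟩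
    rw [h1, h2]
  · have hc0 : ((‖Ψ‖ : ℂ)) ≠ 0 := by
      simpa using norm_ne_zero_iff.mpr hΨ0
    set Ψ' : H := ((‖Ψ‖ : ℂ))⁻¹ • Ψ with hΨ'def
    have hΨ'norm : ‖Ψ'‖ = 1 := by
      rw [hΨ'def, norm_smul, norm_inv, Complex.norm_real, Real.norm_eq_abs,
        abs_of_pos (norm_pos_iff.mpr hΨ0), inv_mul_cancel₀ (norm_ne_zero_iff.mpr hΨ0)]
    have hrec : Ψ = (‖Ψ‖ : ℂ) • Ψ' := by
      rw [hΨ'def, smul_smul, mul_inv_cancel₀ hc0, one_smul]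
    rw [hrec, span_orbit_smul _ _ hc0 Ψ', span_orbit_smul _ _ hc0 Ψ']
    exact uhlmann_aux M_A M_B hcomm huhlmann Ψ' hΨ'norm
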